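/- Let G be an interval graph and let 𝓘 = (I_v)_{v ∈ V(G)} be a minimal interval representation of G. Then: (1) for every k ∈ ℕ for which M(k) := {v ∈ V(G) : k ∈ I_v} is non-empty, M(k) is a max clique of G; and (2) for every max clique M of G there is a k ∈ ℕ with M = M(k). -/

import Mathlib

/-- `lo, hi` is an interval representation of the (finite simple) graph `G`: each
vertex `v` is assigned the closed interval `[lo v, hi v] ⊆ ℕ`, and distinct vertices
are adjacent iff their intervals intersect. -/
def IsIntervalRep {V : Type} (G : SimpleGraph V) (lo hi : V → ℕ) : Prop :=
  (∀ v : V, lo v ≤ hi v) ∧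
  ∀ u v : V, u ≠ v →
    (G.Adj u v ↔ (Set.Icc (lo u) (hi u) ∩ Set.Icc (lo v) (hi v)).Nonempty)

/-- A graph is an interval graph if it has an interval representation. -/
def IsIntervalGraph {V : Type} (G : SimpleGraph V) : Prop :=
  ∃ lo hi : V → ℕ, IsIntervalRep G lo hi

/-- A max clique: an inclusion-maximal clique. -/
def IsMaxClique {V : Type} (G : SimpleGraph V) (s : Set V) : Prop :=
  G.IsClique s ∧ ∀ t : Set V, G.IsClique t → s ⊆ t → t = s

/-- A minimal interval representation: one for which the number of points of
`⋃_v I_v ⊆ ℕ` is minimum among all interval representations of `G`. -/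
def IsMinimalRep {V : Type} (G : SimpleGraph V) (lo hi : V → ℕ) : Prop :=
  IsIntervalRep G lo hi ∧
  ∀ lo' hi' : V → ℕ, IsIntervalRep G lo' hi' →
    (⋃ v : V, Set.Icc (lo v) (hi v)).ncard ≤ (⋃ v : V, Set.Icc (lo' v) (hi' v)).ncard

/-- The map collapsing the points `m` and `m+1` of `ℕ`. -/
def contractMap (m x : ℕ) : ℕ := if x ≤ m then x else x - 1

lemma contractMap_mono (m : ℕ) : Monotone (contractMap m) := by
  intro a b h
  unfold contractMap
  split_ifs <;> omega

lemma contractMap_surjOn (m a b y : ℕ) (hab : a ≤ b) (h1 : contractMap m a ≤ y)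
    (h2 : y ≤ contractMap m b) : ∃ x, a ≤ x ∧ x ≤ b ∧ contractMap m x = y := by
  unfold contractMap at h1 h2
  rcases lt_trichotomy y m with hy | hy | hy
  · exact ⟨y, by split_ifs at h1 <;> omega, by split_ifs at h2 <;> omega,
      by unfold contractMap; split_ifs <;> omega⟩
  · by_cases ham : a ≤ m
    · exact ⟨m, ham, by split_ifs at h2 <;> omega,
        by unfold contractMap; split_ifs <;> omega⟩
    · exact ⟨m + 1, by split_ifs at h1 <;> omega, by split_ifs at h2 <;> omega,
        by unfold contractMap; split_ifs <;> omega⟩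
  · exact ⟨y + 1, by split_ifs at h1 <;> omega, by split_ifs at h2 <;> omega,
      by unfold contractMap; split_ifs <;> omega⟩

lemma contractMap_collision (m x₁ x₂ : ℕ) (h : contractMap m x₁ = contractMap m x₂) :
    x₁ = x₂ ∨ (x₁ = m ∧ x₂ = m + 1) ∨ (x₁ = m + 1 ∧ x₂ = m) := by
  unfold contractMap at h
  split_ifs at h <;> omega

/-- Every set `M(k)` of vertices whose interval contains `k` is a clique. -/
lemma pointSet_isClique {V : Type} (G : SimpleGraph V) (lo hi : V → ℕ)
    (hrep : IsIntervalRep G lo hi) (k : ℕ) :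
    G.IsClique {v : V | k ∈ Set.Icc (lo v) (hi v)} := by
  intro u hu v hv hne
  exact (hrep.2 u v hne).mpr ⟨k, hu, hv⟩

/-- Every clique extends to a max clique (in a finite graph). -/
lemma exists_maxClique_superset {V : Type} [Fintype V] (G : SimpleGraph V) (s : Set V)
    (hs : G.IsClique s) : ∃ M : Set V, IsMaxClique G M ∧ s ⊆ M := by
  obtain ⟨M, hM, hmax⟩ := Set.Finite.exists_maximalFor id {t : Set V | G.IsClique t ∧ s ⊆ t}
    (Set.toFinite _) ⟨s, hs, subset_rfl⟩
  exact ⟨M, ⟨hM.1, fun t ht hsub => Set.Subset.antisymm (hmax ⟨ht, hM.2.trans hsub⟩ hsub) hsub⟩, hM.2⟩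

/-- Helly property: every max clique is of the form `M(k)`; no minimality needed. -/
lemma maxClique_eq_pointSet {V : Type} [Fintype V] (G : SimpleGraph V) (lo hi : V → ℕ)
    (hrep : IsIntervalRep G lo hi) (M : Set V) (hM : IsMaxClique G M) :
    ∃ k : ℕ, M = {v : V | k ∈ Set.Icc (lo v) (hi v)} := by
  rcases M.eq_empty_or_nonempty with h | h
  · refine ⟨0, ?_⟩
    ext v
    simp only [h, Set.mem_empty_iff_false, false_iff]
    intro _
    have h1 : ({v} : Set V) = M := hM.2 {v} (by simpa using Set.pairwise_singleton v G.Adj)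
      (h ▸ Set.empty_subset _)
    rw [h] at h1
    exact absurd h1 (Set.singleton_ne_empty v)
  · obtain ⟨w, hw, hmax⟩ := Set.exists_max_image M lo (Set.toFinite _) h
    have hsub : M ⊆ {v : V | lo w ∈ Set.Icc (lo v) (hi v)} := by
      intro v hv
      simp only [Set.mem_setOf_eq, Set.mem_Icc]
      refine ⟨hmax v hv, ?_⟩
      by_cases hvw : v = w
      · subst hvw; exact hrep.1 v
      · have hadj : G.Adj w v := hM.1 hw hv (fun hh => hvw hh.symm)
        obtain ⟨x, hx1, hx2⟩ := (hrep.2 w v (fun hh => hvw hh.symm)).mp hadj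
        simp only [Set.mem_Icc] at hx1 hx2
        omega
    exact ⟨lo w, (hM.2 _ (pointSet_isClique G lo hi hrep (lo w)) hsub).symm⟩

/-- If the points `m` and `m+1` are both used, and every interval containing `m`
meets every interval containing `m+1`, then the representation can be shrunk. -/
lemma contract_rep {V : Type} [Fintype V] (G : SimpleGraph V) (lo hi : V → ℕ)
    (hrep : IsIntervalRep G lo hi) (m : ℕ)
    (hcross : ∀ u v : V, m ∈ Set.Icc (lo u) (hi u) → m + 1 ∈ Set.Icc (lo v) (hi v) →
      (Set.Icc (lo u) (hi u) ∩ Set.Icc (lo v) (hi v)).Nonempty)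
    (hm : m ∈ ⋃ v : V, Set.Icc (lo v) (hi v))
    (hm1 : m + 1 ∈ ⋃ v : V, Set.Icc (lo v) (hi v)) :
    ∃ lo' hi' : V → ℕ, IsIntervalRep G lo' hi' ∧
      (⋃ v : V, Set.Icc (lo' v) (hi' v)).ncard < (⋃ v : V, Set.Icc (lo v) (hi v)).ncard := by
  set g := contractMap m with hg
  refine ⟨g ∘ lo, g ∘ hi, ⟨fun v => contractMap_mono m (hrep.1 v), ?_⟩, ?_⟩
  · intro u v huv
    rw [hrep.2 u v huv]
    constructor
    · rintro ⟨x, hxu, hxv⟩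
      simp only [Set.mem_Icc] at hxu hxv
      exact ⟨g x, Set.mem_inter
        (Set.mem_Icc.mpr ⟨contractMap_mono m hxu.1, contractMap_mono m hxu.2⟩)
        (Set.mem_Icc.mpr ⟨contractMap_mono m hxv.1, contractMap_mono m hxv.2⟩)⟩
    · rintro ⟨y, hyu, hyv⟩
      simp only [Function.comp_apply, Set.mem_Icc] at hyu hyv
      obtain ⟨xu, hxu1, hxu2, hxu3⟩ := contractMap_surjOn m (lo u) (hi u) y (hrep.1 u) hyu.1 hyu.2
      obtain ⟨xv, hxv1, hxv2, hxv3⟩ := contractMap_surjOn m (lo v) (hi v) y (hrep.1 v) hyv.1 hyv.2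
      rcases contractMap_collision m xu xv (by rw [hxu3, hxv3]) with heq | ⟨h1, h2⟩ | ⟨h1, h2⟩
      · exact ⟨xu, Set.mem_Icc.mpr ⟨hxu1, hxu2⟩, Set.mem_Icc.mpr (heq ▸ ⟨hxv1, hxv2⟩)⟩
      · exact hcross u v (Set.mem_Icc.mpr (h1 ▸ ⟨hxu1, hxu2⟩))
          (Set.mem_Icc.mpr (h2 ▸ ⟨hxv1, hxv2⟩))
      · rw [Set.inter_comm]
        exact hcross v u (Set.mem_Icc.mpr (h2 ▸ ⟨hxv1, hxv2⟩))
          (Set.mem_Icc.mpr (h1 ▸ ⟨hxu1, hxu2⟩))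
  · set U := ⋃ v : V, Set.Icc (lo v) (hi v) with hU
    have hUfin : U.Finite := Set.finite_iUnion (fun v => Set.finite_Icc _ _)
    have himg : (⋃ v : V, Set.Icc ((g ∘ lo) v) ((g ∘ hi) v)) = g '' U := by
      ext y
      simp only [Set.mem_iUnion, Set.mem_image, hU, Function.comp_apply, Set.mem_Icc]
      constructor
      · rintro ⟨v, hy1, hy2⟩
        obtain ⟨x, hx1, hx2, hx3⟩ := contractMap_surjOn m (lo v) (hi v) y (hrep.1 v) hy1 hy2
        exact ⟨x, ⟨v, hx1, hx2⟩, hx3⟩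
      · rintro ⟨x, ⟨v, hx1, hx2⟩, hx3⟩
        exact ⟨v, hx3 ▸ ⟨contractMap_mono m hx1, contractMap_mono m hx2⟩⟩
    rw [himg]
    have himg2 : g '' U = g '' (U \ {m + 1}) := by
      apply Set.Subset.antisymm
      · rintro y ⟨x, hx, hx2⟩
        by_cases hxm : x = m + 1
        · refine ⟨m, ⟨hm, by simp⟩, ?_⟩
          rw [← hx2, hxm]
          unfold g
          unfold contractMap
          split_ifs <;> omega
        · exact ⟨x, ⟨hx, hxm⟩, hx2⟩
      · exact Set.image_mono Set.diff_subset
    rw [himg2]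
    calc (g '' (U \ {m + 1})).ncard ≤ (U \ {m + 1}).ncard :=
          Set.ncard_image_le (hUfin.subset Set.diff_subset)
      _ < U.ncard := Set.ncard_diff_singleton_lt_of_mem hm1 hUfin

/-- Let `lo, hi` be a minimal interval representation of the
interval graph `G`.  Then (1) for every `k ∈ ℕ` for which
`M(k) := {v : k ∈ I_v}` is non-empty, `M(k)` is a max clique of `G`; and (2) every
max clique of `G` is of the form `M(k)` for some `k ∈ ℕ`. -/
theorem minimalRep_maxCliques {V : Type} [Fintype V] (G : SimpleGraph V)
    (lo hi : V → ℕ) (hmin : IsMinimalRep G lo hi) :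
    (∀ k : ℕ, {v : V | k ∈ Set.Icc (lo v) (hi v)}.Nonempty →
      IsMaxClique G {v : V | k ∈ Set.Icc (lo v) (hi v)}) ∧
    (∀ M : Set V, IsMaxClique G M →
      ∃ k : ℕ, M = {v : V | k ∈ Set.Icc (lo v) (hi v)}) := by
  obtain ⟨hrep, hopt⟩ := hmin
  refine ⟨?_, fun M hM => maxClique_eq_pointSet G lo hi hrep M hM⟩
  intro k hne
  refine ⟨pointSet_isClique G lo hi hrep k, ?_⟩
  intro t ht hsub
  by_contra hteq
  -- extend t to a max clique, which is M(k') for some k'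
  obtain ⟨M', hM', htM'⟩ := exists_maxClique_superset G t ht
  obtain ⟨k', hk'⟩ := maxClique_eq_pointSet G lo hi hrep M' hM'
  have hsub' : {v : V | k ∈ Set.Icc (lo v) (hi v)} ⊆ {v : V | k' ∈ Set.Icc (lo v) (hi v)} := by
    intro v hv
    exact hk' ▸ htM' (hsub hv)
  have hkk' : k ≠ k' := by
    intro h
    subst h
    exact hteq (Set.Subset.antisymm (fun v hv => hk' ▸ htM' hv) hsub)
  obtain ⟨v₀, hv₀⟩ := hne
  simp only [Set.mem_setOf_eq, Set.mem_Icc] at hv₀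
  have hk'v₀ : lo v₀ ≤ k' ∧ k' ≤ hi v₀ := by
    have := hsub' (show v₀ ∈ _ from Set.mem_Icc.mpr hv₀)
    simpa only [Set.mem_setOf_eq, Set.mem_Icc] using this
  rcases hkk'.lt_or_gt with hlt | hlt
  · -- k < k' : merge the points k and k+1
    have hcross : ∀ u v : V, k ∈ Set.Icc (lo u) (hi u) → k + 1 ∈ Set.Icc (lo v) (hi v) →
        (Set.Icc (lo u) (hi u) ∩ Set.Icc (lo v) (hi v)).Nonempty := by
      intro u v hu hv
      have hu' := hsub' (show u ∈ _ from hu)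
      simp only [Set.mem_setOf_eq, Set.mem_Icc] at hu hv hu' ⊢
      exact ⟨k + 1, Set.mem_inter (Set.mem_Icc.mpr ⟨by omega, by omega⟩)
        (Set.mem_Icc.mpr ⟨by omega, by omega⟩)⟩
    have hm : k ∈ ⋃ v : V, Set.Icc (lo v) (hi v) :=
      Set.mem_iUnion.mpr ⟨v₀, Set.mem_Icc.mpr hv₀⟩
    have hm1 : k + 1 ∈ ⋃ v : V, Set.Icc (lo v) (hi v) :=
      Set.mem_iUnion.mpr ⟨v₀, Set.mem_Icc.mpr (by omega)⟩
    obtain ⟨lo', hi', hrep', hlt'⟩ := contract_rep G lo hi hrep k hcross hm hm1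
    exact absurd (hopt lo' hi' hrep') (by omega)
  · -- k' < k : merge the points k-1 and k
    have hk1 : k - 1 + 1 = k := by omega
    have hcross : ∀ u v : V, k - 1 ∈ Set.Icc (lo u) (hi u) →
        k - 1 + 1 ∈ Set.Icc (lo v) (hi v) →
        (Set.Icc (lo u) (hi u) ∩ Set.Icc (lo v) (hi v)).Nonempty := by
      intro u v hu hv
      rw [hk1] at hv
      have hv' := hsub' (show v ∈ _ from hv)
      simp only [Set.mem_setOf_eq, Set.mem_Icc] at hu hv hv' ⊢
      exact ⟨k - 1, Set.mem_inter (Set.mem_Icc.mpr ⟨by omega, by omega⟩)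
        (Set.mem_Icc.mpr ⟨by omega, by omega⟩)⟩
    have hm : k - 1 ∈ ⋃ v : V, Set.Icc (lo v) (hi v) :=
      Set.mem_iUnion.mpr ⟨v₀, Set.mem_Icc.mpr (by omega)⟩
    have hm1 : k - 1 + 1 ∈ ⋃ v : V, Set.Icc (lo v) (hi v) :=
      Set.mem_iUnion.mpr ⟨v₀, Set.mem_Icc.mpr (by omega)⟩
    obtain ⟨lo', hi', hrep', hlt'⟩ := contract_rep G lo hi hrep (k - 1) hcross hm hm1
    exact absurd (hopt lo' hi' hrep') (by omega)
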